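/- Let (X,d) be a metric space, T : X → X a map, and x₀ ∈ X a point with bounded orbit; set xₙ = Tⁿx₀ and bₙ = sup_{i,j ≥ n} d(xᵢ, xⱼ). Suppose there exist functions φₙ : X × X → [0,∞) with d(Tⁿx, Tⁿy) ≤ φₙ(x,y) for all x,y ∈ X and n ∈ ℕ, such that φₙ converges to φ : X × X → [0,∞) uniformly on B × B for every bounded subset B ⊂ X; and suppose there is ψ : [0,∞) → [0,∞), nondecreasing, right upper semicontinuous, with ψ(t) < t for all t > 0, such that φ(x,y) ≤ ψ(M(x,y)) for all x,y, where M(x,y) = max{d(x,y), d(Tx,x), d(Ty,y), d(Ty,x), d(Tx,y)}. Let g(t) = sup_{0 ≤ s ≤ t} ψ(s). Then for every ε > 0 there exists M ∈ ℕ such that b_{n+M} ≤ g(bₙ) + ε for all n ∈ ℕ. -/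

import Mathlib

open Set Filter Function

/-- the tail diameters bₙ = sup_{i,j ≥ n} d(xᵢ,xⱼ) of a bounded
orbit of an asymptotic pointwise contraction satisfy: for every ε > 0 there is
M ∈ ℕ with b_{n+M} ≤ g(bₙ) + ε for all n, where g(t) = sup_{0 ≤ s ≤ t} ψ(s). -/
theorem stmt_10 {X : Type*} [MetricSpace X]
    (T : X → X)
    (x₀ : X) (hx₀ : Bornology.IsBounded (Set.range fun n => T^[n] x₀))
    (φ : ℕ → X → X → ℝ) (φlim : X → X → ℝ)
    (hφ_nonneg : ∀ n x y, 0 ≤ φ n x y)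
    (hφlim_nonneg : ∀ x y, 0 ≤ φlim x y)
    (hd : ∀ n x y, dist (T^[n] x) (T^[n] y) ≤ φ n x y)
    (hunif : ∀ B : Set X, Bornology.IsBounded B → ∀ ε > 0, ∃ N, ∀ n ≥ N,
      ∀ x ∈ B, ∀ y ∈ B, |φ n x y - φlim x y| ≤ ε)
    (ψ : ℝ → ℝ)
    (hψ_nonneg : ∀ t, 0 ≤ t → 0 ≤ ψ t)
    (hψ_mono : ∀ s t, 0 ≤ s → s ≤ t → ψ s ≤ ψ t)
    (hψ_usc : ∀ t₀, 0 ≤ t₀ → limsup ψ (nhdsWithin t₀ (Ioi t₀)) ≤ ψ t₀)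
    (hψ_lt : ∀ t, 0 < t → ψ t < t)
    (hφψ : ∀ x y, φlim x y ≤ ψ (max (dist x y) (max (dist (T x) x)
      (max (dist (T y) y) (max (dist (T y) x) (dist (T x) y))))))
    (b : ℕ → ℝ)
    (hb : ∀ n, b n = sSup {r : ℝ | ∃ i j : ℕ, n ≤ i ∧ n ≤ j ∧
      r = dist (T^[i] x₀) (T^[j] x₀)})
    (g : ℝ → ℝ) (hg : ∀ t, 0 ≤ t → g t = sSup (ψ '' Icc 0 t)) :
    ∀ ε > 0, ∃ M : ℕ, ∀ n : ℕ, b (n + M) ≤ g (b n) + ε := by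
  intro ε hε
  set orb := Set.range fun n => T^[n] x₀ with horb
  obtain ⟨C, hC⟩ := Metric.isBounded_iff.mp hx₀
  have horbmem : ∀ k : ℕ, T^[k] x₀ ∈ orb := fun k => ⟨k, rfl⟩
  have hbdd : ∀ n : ℕ, BddAbove {r : ℝ | ∃ i j : ℕ, n ≤ i ∧ n ≤ j ∧
      r = dist (T^[i] x₀) (T^[j] x₀)} := by
    intro n
    refine ⟨C, ?_⟩
    rintro r ⟨i, j, hi, hj, rfl⟩
    exact hC (horbmem i) (horbmem j)
  have hdle : ∀ n i j : ℕ, n ≤ i → n ≤ j → dist (T^[i] x₀) (T^[j] x₀) ≤ b n := by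
    intro n i j hi hj
    rw [hb]
    exact le_csSup (hbdd n) ⟨i, j, hi, hj, rfl⟩
  have hbnn : ∀ n, 0 ≤ b n := by
    intro n
    have h0 := hdle n n n le_rfl le_rfl
    simpa using h0
  obtain ⟨N, hN⟩ := hunif orb hx₀ ε hε
  refine ⟨N, fun n => ?_⟩
  rw [hb (n + N)]
  refine csSup_le ⟨0, ⟨n + N, n + N, le_rfl, le_rfl, (dist_self _).symm⟩⟩ ?_
  rintro r ⟨i, j, hi, hj, rfl⟩
  set u := T^[i - N] x₀ with hu
  set v := T^[j - N] x₀ with hv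
  have hui : T^[N] u = T^[i] x₀ := by
    rw [hu, ← Function.iterate_add_apply]; congr 1; omega
  have hvj : T^[N] v = T^[j] x₀ := by
    rw [hv, ← Function.iterate_add_apply]; congr 1; omega
  have hTu : T u = T^[i - N + 1] x₀ := (Function.iterate_succ_apply' T (i - N) x₀).symm
  have hTv : T v = T^[j - N + 1] x₀ := (Function.iterate_succ_apply' T (j - N) x₀).symm
  set Muv := max (dist u v) (max (dist (T u) u)
      (max (dist (T v) v) (max (dist (T v) u) (dist (T u) v)))) with hMuv
  have hM1 : dist u v ≤ b n := hdle n _ _ (by omega) (by omega)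
  have hM2 : dist (T u) u ≤ b n := by rw [hTu, hu]; exact hdle n _ _ (by omega) (by omega)
  have hM3 : dist (T v) v ≤ b n := by rw [hTv, hv]; exact hdle n _ _ (by omega) (by omega)
  have hM4 : dist (T v) u ≤ b n := by rw [hTv, hu]; exact hdle n _ _ (by omega) (by omega)
  have hM5 : dist (T u) v ≤ b n := by rw [hTu, hv]; exact hdle n _ _ (by omega) (by omega)
  have hMle : Muv ≤ b n := by
    rw [hMuv]
    exact max_le hM1 (max_le hM2 (max_le hM3 (max_le hM4 hM5)))
  have hMnn : 0 ≤ Muv := le_trans dist_nonneg (le_max_left _ _)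
  have hψg : ψ Muv ≤ g (b n) := by
    rw [hg (b n) (hbnn n)]
    refine le_csSup ⟨ψ (b n), ?_⟩ ⟨Muv, ⟨hMnn, hMle⟩, rfl⟩
    rintro _ ⟨s, hs, rfl⟩
    exact hψ_mono s (b n) hs.1 hs.2
  have habs := hN N le_rfl u (horbmem _) v (horbmem _)
  have h1 : φ N u v ≤ φlim u v + ε := by
    have := (abs_le.mp habs).2
    linarith
  calc dist (T^[i] x₀) (T^[j] x₀) = dist (T^[N] u) (T^[N] v) := by rw [hui, hvj]
    _ ≤ φ N u v := hd N u v
    _ ≤ φlim u v + ε := h1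
    _ ≤ ψ Muv + ε := add_le_add_left (hφψ u v) ε
    _ ≤ g (b n) + ε := add_le_add_left hψg ε
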